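/- Both the prefix subpath (p_0,...,p_m) and the suffix subpath (p_m,...,p_k) of any simple path P, where p_m is the maximum vertex of P, are realized by (T_{ijk}(n))², the sequence T_{ijk}(n) repeated twice. -/

import Mathlib

/-- The sequence `T_ijk(n)`: element at position `a·n² + b·n + c` is `(a+1, b+1, c+1)`. -/
def Tijk (n : ℕ) : List (ℕ × ℕ × ℕ) :=
  (List.range n).flatMap fun a => (List.range n).flatMap fun b =>
    (List.range n).map fun c => (a + 1, b + 1, c + 1)

/-- The sequence `T_kij(n)`: element at position `a·n² + b·n + c` is `(b+1, c+1, a+1)`. -/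
def Tkij (n : ℕ) : List (ℕ × ℕ × ℕ) :=
  (List.range n).flatMap fun a => (List.range n).flatMap fun b =>
    (List.range n).map fun c => (b + 1, c + 1, a + 1)

/-- `T_ijk(n, i, j)`: the prefix of `T_ijk(n)` up to and including the tuple `(i, j, n)`. -/
def TijkPrefix (n i j : ℕ) : List (ℕ × ℕ × ℕ) :=
  (Tijk n).take ((i - 1) * n ^ 2 + (j - 1) * n + n)

/-- A path `P` (a list of vertices) is realized by a sequence `T` of 3-tuples:
either it has at most one edge, or some position `d` of `T` holds the tuple
`(first, last, split vertex p_x)` with both halves realized by the length-`d` prefix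
(`d` here is 0-indexed, so `T.take d` is the prefix strictly before position `d`). -/
inductive Realized : List (ℕ × ℕ × ℕ) → List ℕ → Prop
  | base (T : List (ℕ × ℕ × ℕ)) (P : List ℕ) (h : P.length ≤ 2) : Realized T P
  | step (T : List (ℕ × ℕ × ℕ)) (P : List ℕ) (d x : ℕ)
      (hd : d < T.length) (hx1 : 1 ≤ x) (hx2 : x ≤ P.length - 2)
      (ht : T.getD d default = (P.getD 0 0, P.getD (P.length - 1) 0, P.getD x 0))
      (h1 : Realized (T.take d) (P.take (x + 1)))
      (h2 : Realized (T.take d) (P.drop x)) : Realized T P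

/-- A path with at least one edge, all of whose vertices lie in `[1, n]`. -/
def ValidPath (n : ℕ) (P : List ℕ) : Prop :=
  2 ≤ P.length ∧ ∀ v ∈ P, 1 ≤ v ∧ v ≤ n

/-- Increasing path. -/
def Increasing (P : List ℕ) : Prop := P.Chain' (· < ·)

/-- Decreasing path. -/
def Decreasing (P : List ℕ) : Prop := P.Chain' (· > ·)

/-- Valley path: every interior vertex is at most the min of the endpoints. -/
def Valley (P : List ℕ) : Prop :=
  ∀ t, 1 ≤ t → t ≤ P.length - 2 →
    P.getD t 0 ≤ min (P.getD 0 0) (P.getD (P.length - 1) 0)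

/-- Proper path: no two consecutive vertices `p_t, p_{t+1}` with `1 ≤ t ≤ k-2`
both exceed the min of the endpoints. -/
def Proper (P : List ℕ) : Prop :=
  ¬ ∃ t, 1 ≤ t ∧ t ≤ P.length - 3 ∧
    min (P.getD 0 0) (P.getD (P.length - 1) 0) < P.getD t 0 ∧
    min (P.getD 0 0) (P.getD (P.length - 1) 0) < P.getD (t + 1) 0

/-- Total weight of a path: the sum of the weights of its consecutive edges. -/
def pathWeight (W : ℕ → ℕ → WithTop ℤ) (P : List ℕ) : WithTop ℤ :=
  ((P.zip P.tail).map fun q => W q.1 q.2).sum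

/-- One relaxation step `A[i,j] ← min(A[i,j], A[i,k] + A[k,j])` for the tuple `(i,j,k)`. -/
def relaxStep (A : ℕ → ℕ → WithTop ℤ) (t : ℕ × ℕ × ℕ) : ℕ → ℕ → WithTop ℤ :=
  fun i j => if i = t.1 ∧ j = t.2.1 then min (A i j) (A i t.2.2 + A t.2.2 j) else A i j

/-- Apply the relaxation steps of the sequence `T` in order, starting from `A`. -/
def relaxAll (A : ℕ → ℕ → WithTop ℤ) (T : List (ℕ × ℕ × ℕ)) : ℕ → ℕ → WithTop ℤ :=
  T.foldl relaxStep A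

/-- No negative cycles on the vertex set `[1, n]`. -/
def NoNegCycle (n : ℕ) (W : ℕ → ℕ → WithTop ℤ) : Prop :=
  ∀ P : List ℕ, 2 ≤ P.length → (∀ v ∈ P, 1 ≤ v ∧ v ≤ n) →
    P.getD 0 0 = P.getD (P.length - 1) 0 → 0 ≤ pathWeight W P

lemma take_prefix_take {α} (l : List α) {m n : ℕ} (h : m ≤ n) : l.take m <+: l.take n := by
  have := List.take_prefix m (l.take n)
  rwa [List.take_take, Nat.min_eq_left h] at this

lemma prefix_append_left {α} (l : List α) {l₂ l₃ : List α} (h : l₂ <+: l₃) :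
    l ++ l₂ <+: l ++ l₃ := by
  obtain ⟨t, rfl⟩ := h; exact ⟨t, by simp⟩

lemma flatMap_const_length {α β} (f : α → List β) (L : ℕ) (h : ∀ a, (f a).length = L)
    (l : List α) : (l.flatMap f).length = l.length * L := by
  induction l with
  | nil => simp
  | cons a t ih => simp [List.flatMap_cons, ih, h]; ring

lemma flatMap_getElem? {α β} (f : α → List β) (L : ℕ) (h : ∀ a, (f a).length = L)
    (l : List α) (i r : ℕ) (hi : i < l.length) (hr : r < L) :
    (l.flatMap f)[i * L + r]? = (f l[i])[r]? := by
  induction l generalizing i with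
  | nil => simp at hi
  | cons a t ih =>
    rcases i with _ | i
    · rw [List.flatMap_cons, List.getElem?_append, if_pos (by simpa [h a] using hr)]
      simp
    · rw [List.flatMap_cons, List.getElem?_append_right (by rw [h a]; nlinarith)]
      have : (i + 1) * L + r - (f a).length = i * L + r := by rw [h a]; ring_nf; omega
      rw [this, ih i (by simpa using hi)]
      simp

lemma Tijk_length (n : ℕ) : (Tijk n).length = n ^ 3 := by
  show ((List.range n).flatMap _).length = n ^ 3
  rw [flatMap_const_length _ (n * n)]
  · rw [List.length_range]; ring
  · intro a
    show ((List.range n).flatMap _).length = n * n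
    rw [flatMap_const_length _ n (by simp), List.length_range]

lemma Tijk_getD (n a b c : ℕ) (ha : 1 ≤ a) (han : a ≤ n) (hb : 1 ≤ b) (hbn : b ≤ n)
    (hc : 1 ≤ c) (hcn : c ≤ n) :
    (Tijk n).getD ((a - 1) * n ^ 2 + (b - 1) * n + (c - 1)) default = (a, b, c) := by
  have hidx : (a - 1) * n ^ 2 + (b - 1) * n + (c - 1)
      = (a - 1) * (n * n) + ((b - 1) * n + (c - 1)) := by rw [pow_two]; ring
  have hconst : ∀ x : ℕ, (((List.range n).flatMap fun b1 =>
      (List.range n).map fun c1 => (x + 1, b1 + 1, c1 + 1))).length = n * n := by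
    intro x
    rw [flatMap_const_length _ n (by simp), List.length_range]
  have hlt : (b - 1) * n + (c - 1) < n * n := by
    have h1 : b - 1 + 1 ≤ n := by omega
    have h2 : c - 1 < n := by omega
    nlinarith
  rw [List.getD_eq_getElem?_getD, hidx]
  show (((List.range n).flatMap _)[_]?).getD _ = _
  rw [flatMap_getElem? _ (n * n) (fun x => hconst _) _ _ _ (by simp; omega) hlt]
  simp only [List.getElem_range]
  rw [flatMap_getElem? _ n (fun x => by simp) _ _ _ (by simp; omega) (by omega)]
  simp only [List.getElem_range, List.getElem?_map, List.getElem?_range (show c - 1 < n by omega)]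
  simp only [Option.map_some, Option.getD_some]
  rw [Nat.sub_add_cancel ha, Nat.sub_add_cancel hb, Nat.sub_add_cancel hc]

lemma getD_take_of_lt {α} (l : List α) {m n : ℕ} (h : m < n) (d : α) :
    (l.take n).getD m d = l.getD m d := by
  rw [List.getD_eq_getElem?_getD, List.getD_eq_getElem?_getD, List.getElem?_take, if_pos h]

lemma getD_drop' {α} (l : List α) (m n : ℕ) (d : α) :
    (l.drop n).getD m d = l.getD (n + m) d := by
  rw [List.getD_eq_getElem?_getD, List.getD_eq_getElem?_getD, List.getElem?_drop]

lemma Realized.mono {T T' : List (ℕ × ℕ × ℕ)} {P : List ℕ}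
    (h : Realized T P) (hp : T <+: T') : Realized T' P := by
  induction h generalizing T' with
  | base _ _ h => exact .base _ _ h
  | step T P d x hd hx1 hx2 ht h1 h2 ih1 ih2 =>
    obtain ⟨t, rfl⟩ := hp
    refine .step _ _ d x (by simp only [List.length_append]; omega) hx1 hx2 ?_ ?_ ?_
    · rw [List.getD_append _ _ _ _ hd]; exact ht
    · rw [List.take_append_of_le_length (le_of_lt hd)]; exact h1
    · rw [List.take_append_of_le_length (le_of_lt hd)]; exact h2

lemma arith_lt3 {n a b x : ℕ} (ha : 1 ≤ a) (han : a ≤ n) (hbn : b ≤ n) (hxn : x ≤ n) :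
    (a - 1) * n ^ 2 + (b - 1) * n + (x - 1) < n ^ 3 := by
  obtain ⟨a', rfl⟩ : ∃ a', a = a' + 1 := ⟨a - 1, by omega⟩
  have h1 : a' + 1 ≤ n := han
  have h2 : b - 1 + 1 ≤ n := by omega
  have h3 : x - 1 < n := by omega
  have hn : 1 ≤ n := by omega
  simp only [Nat.add_sub_cancel]
  nlinarith [Nat.sub_le b 1, Nat.sub_le x 1]

lemma arith_B {n a b : ℕ} (ha : 1 ≤ a) (han : a ≤ n) (hbn : b ≤ n) :
    (a - 1) * n ^ 2 + (b - 1) * n + n ≤ n ^ 3 := by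
  obtain ⟨a', rfl⟩ : ∃ a', a = a' + 1 := ⟨a - 1, by omega⟩
  have h1 : a' + 1 ≤ n := han
  have h2 : b - 1 + 1 ≤ n := by omega
  have hn : 1 ≤ n := by omega
  simp only [Nat.add_sub_cancel]
  nlinarith [Nat.sub_le b 1]

lemma arith_left {n a b x : ℕ} (hx : 1 ≤ x) (hxb : x < b) (hbn : b ≤ n) :
    (a - 1) * n ^ 2 + (x - 1) * n + n ≤ (a - 1) * n ^ 2 + (b - 1) * n + (x - 1) := by
  obtain ⟨x', rfl⟩ : ∃ x', x = x' + 1 := ⟨x - 1, by omega⟩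
  obtain ⟨b', rfl⟩ : ∃ b', b = b' + 1 := ⟨b - 1, by omega⟩
  simp only [Nat.add_sub_cancel]
  have : x' + 1 ≤ b' := by omega
  nlinarith

lemma arith_right {n a b x : ℕ} (hx : 1 ≤ x) (hxa : x < a) (han : a ≤ n) :
    (x - 1) * n ^ 2 + (b - 1) * n + n ≤ (a - 1) * n ^ 2 + (b - 1) * n + (x - 1) := by
  obtain ⟨x', rfl⟩ : ∃ x', x = x' + 1 := ⟨x - 1, by omega⟩
  obtain ⟨a', rfl⟩ : ∃ a', a = a' + 1 := ⟨a - 1, by omega⟩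
  simp only [Nat.add_sub_cancel]
  have h1 : x' + 1 ≤ a' := by omega
  have hn : 1 ≤ n := by omega
  nlinarith

lemma valley_realized (n : ℕ) (k : ℕ) : ∀ P : List ℕ, P.length = k →
    (∀ v ∈ P, 1 ≤ v ∧ v ≤ n) → P.Nodup →
    (∀ t, 1 ≤ t → t ≤ P.length - 2 →
      P.getD t 0 ≤ min (P.getD 0 0) (P.getD (P.length - 1) 0)) →
    Realized ((Tijk n).take
      ((P.getD 0 0 - 1) * n ^ 2 + (P.getD (P.length - 1) 0 - 1) * n + n)) P := by
  induction k using Nat.strong_induction_on with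
  | _ k ih =>
  intro P hk hv hnd hval
  by_cases hlen : P.length ≤ 2
  · exact .base _ _ hlen
  push_neg at hlen
  have h0lt : 0 < P.length := by omega
  have hllt : P.length - 1 < P.length := by omega
  obtain ⟨s, hs, hsmax⟩ := Finset.exists_max_image (Finset.Icc 1 (P.length - 2))
    (fun t => P.getD t 0) ⟨1, by rw [Finset.mem_Icc]; omega⟩
  rw [Finset.mem_Icc] at hs
  have hslt : s < P.length := by omega
  set a := P.getD 0 0 with ha_def
  set b := P.getD (P.length - 1) 0 with hb_def
  set x := P.getD s 0 with hx_def
  have ha := hv a (by rw [ha_def, List.getD_eq_getElem _ _ h0lt]; exact List.getElem_mem _)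
  have hb := hv b (by rw [hb_def, List.getD_eq_getElem _ _ hllt]; exact List.getElem_mem _)
  have hx := hv x (by rw [hx_def, List.getD_eq_getElem _ _ hslt]; exact List.getElem_mem _)
  have hne : ∀ i j, i < P.length → j < P.length → i ≠ j → P.getD i 0 ≠ P.getD j 0 := by
    intro i j hi hj hij
    rw [List.getD_eq_getElem _ _ hi, List.getD_eq_getElem _ _ hj]
    exact fun h => hij ((List.Nodup.getElem_inj_iff hnd).mp h)
  have hmin := hval s hs.1 hs.2
  have hxa : x < a := lt_of_le_of_ne (le_trans hmin (min_le_left _ _))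
    (hne s 0 hslt h0lt (by omega))
  have hxb : x < b := lt_of_le_of_ne (le_trans hmin (min_le_right _ _))
    (hne s (P.length - 1) hslt hllt (by omega))
  have hn1 : 1 ≤ n := le_trans ha.1 ha.2
  have hdB : (a - 1) * n ^ 2 + (b - 1) * n + (x - 1) < (a - 1) * n ^ 2 + (b - 1) * n + n := by
    have := hx.2; omega
  have hd3 := arith_lt3 (n := n) ha.1 ha.2 hb.2 hx.2
  refine Realized.step _ _ ((a - 1) * n ^ 2 + (b - 1) * n + (x - 1)) s ?_ hs.1 hs.2 ?_ ?_ ?_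
  · rw [List.length_take, Tijk_length]; exact lt_min hdB hd3
  · rw [getD_take_of_lt _ hdB, Tijk_getD n a b x ha.1 ha.2 hb.1 hb.2 hx.1 hx.2,
      ha_def, hb_def, hx_def]
  · -- left half
    rw [List.take_take, Nat.min_eq_left (le_of_lt hdB)]
    have hlen1 : (P.take (s + 1)).length = s + 1 := by rw [List.length_take]; omega
    have hg0 : (P.take (s + 1)).getD 0 0 = a := by
      rw [getD_take_of_lt _ (by omega : (0:ℕ) < s + 1)]
    have hgl : (P.take (s + 1)).getD ((P.take (s + 1)).length - 1) 0 = x := by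
      rw [hlen1, Nat.add_sub_cancel, getD_take_of_lt _ (by omega : s < s + 1)]
    have hval1 : ∀ t, 1 ≤ t → t ≤ (P.take (s + 1)).length - 2 →
        (P.take (s + 1)).getD t 0 ≤
          min ((P.take (s + 1)).getD 0 0) ((P.take (s + 1)).getD ((P.take (s + 1)).length - 1) 0) := by
      intro t ht1 ht2
      rw [hlen1] at ht2
      rw [hg0, hgl, getD_take_of_lt _ (by omega : t < s + 1)]
      refine le_min (le_trans (hval t ht1 (by omega)) (min_le_left _ _)) ?_
      exact hsmax t (Finset.mem_Icc.mpr ⟨ht1, by omega⟩)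
    have IH := ih (s + 1) (by omega) (P.take (s + 1)) hlen1
      (fun v hv' => hv v ((List.take_sublist _ _).subset hv'))
      ((List.take_sublist _ _).nodup hnd) hval1
    rw [hg0, hgl] at IH
    exact IH.mono (take_prefix_take _ (arith_left hx.1 hxb hb.2))
  · -- right half
    rw [List.take_take, Nat.min_eq_left (le_of_lt hdB)]
    have hlen2 : (P.drop s).length = P.length - s := List.length_drop
    have hg0 : (P.drop s).getD 0 0 = x := by rw [getD_drop', Nat.add_zero]
    have hgl : (P.drop s).getD ((P.drop s).length - 1) 0 = b := by
      rw [getD_drop', hlen2, show s + (P.length - s - 1) = P.length - 1 by omega]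
    have hval2 : ∀ t, 1 ≤ t → t ≤ (P.drop s).length - 2 →
        (P.drop s).getD t 0 ≤
          min ((P.drop s).getD 0 0) ((P.drop s).getD ((P.drop s).length - 1) 0) := by
      intro t ht1 ht2
      rw [hlen2] at ht2
      rw [hg0, hgl, getD_drop']
      refine le_min ?_ (le_trans (hval (s + t) (by omega) (by omega)) (min_le_right _ _))
      exact hsmax (s + t) (Finset.mem_Icc.mpr ⟨by omega, by omega⟩)
    have IH := ih (P.length - s) (by omega) (P.drop s) hlen2
      (fun v hv' => hv v ((List.drop_sublist _ _).subset hv'))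
      ((List.drop_sublist _ _).nodup hnd) hval2
    rw [hg0, hgl] at IH
    exact IH.mono (take_prefix_take _ (arith_right hx.1 hxa ha.2))

lemma maxlast_realized (n : ℕ) (k : ℕ) : ∀ P : List ℕ, P.length = k →
    (∀ v ∈ P, 1 ≤ v ∧ v ≤ n) → P.Nodup →
    (∀ t, t < P.length → P.getD t 0 ≤ P.getD (P.length - 1) 0) →
    Realized (Tijk n ++ (Tijk n).take
      ((P.getD 0 0 - 1) * n ^ 2 + (P.getD (P.length - 1) 0 - 1) * n + n)) P := by
  induction k using Nat.strong_induction_on with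
  | _ k ih =>
  intro P hk hv hnd hmax
  by_cases hlen : P.length ≤ 2
  · exact .base _ _ hlen
  push_neg at hlen
  have h0lt : 0 < P.length := by omega
  have hllt : P.length - 1 < P.length := by omega
  set a := P.getD 0 0 with ha_def
  set b := P.getD (P.length - 1) 0 with hb_def
  have ha := hv a (by rw [ha_def, List.getD_eq_getElem _ _ h0lt]; exact List.getElem_mem _)
  have hb := hv b (by rw [hb_def, List.getD_eq_getElem _ _ hllt]; exact List.getElem_mem _)
  have hne : ∀ i j, i < P.length → j < P.length → i ≠ j → P.getD i 0 ≠ P.getD j 0 := by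
    intro i j hi hj hij
    rw [List.getD_eq_getElem _ _ hi, List.getD_eq_getElem _ _ hj]
    exact fun h => hij ((List.Nodup.getElem_inj_iff hnd).mp h)
  by_cases hc : ∀ t, 1 ≤ t → t ≤ P.length - 2 → P.getD t 0 ≤ a
  · have hval : ∀ t, 1 ≤ t → t ≤ P.length - 2 →
        P.getD t 0 ≤ min (P.getD 0 0) (P.getD (P.length - 1) 0) :=
      fun t ht1 ht2 => le_min (hc t ht1 ht2) (hmax t (by omega))
    exact (valley_realized n P.length P rfl hv hnd hval).mono
      ((List.take_prefix _ _).trans (List.prefix_append _ _))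
  push_neg at hc
  obtain ⟨t₀, ht₀1, ht₀2, ht₀3⟩ := hc
  obtain ⟨s, hs, hsmax⟩ := Finset.exists_max_image (Finset.Icc 1 (P.length - 2))
    (fun t => P.getD t 0) ⟨1, by rw [Finset.mem_Icc]; omega⟩
  rw [Finset.mem_Icc] at hs
  have hslt : s < P.length := by omega
  set x := P.getD s 0 with hx_def
  have hx := hv x (by rw [hx_def, List.getD_eq_getElem _ _ hslt]; exact List.getElem_mem _)
  have hax : a < x := lt_of_lt_of_le ht₀3 (hsmax t₀ (Finset.mem_Icc.mpr ⟨ht₀1, ht₀2⟩))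
  have hxb : x < b := lt_of_le_of_ne (hmax s (by omega))
    (hne s (P.length - 1) hslt hllt (by omega))
  have hn1 : 1 ≤ n := le_trans ha.1 ha.2
  have hdB : (a - 1) * n ^ 2 + (b - 1) * n + (x - 1) < (a - 1) * n ^ 2 + (b - 1) * n + n := by
    have := hx.2; omega
  have hB3 := arith_B (n := n) ha.1 ha.2 hb.2
  have htake : (Tijk n ++ (Tijk n).take ((a - 1) * n ^ 2 + (b - 1) * n + n)).take
        (n ^ 3 + ((a - 1) * n ^ 2 + (b - 1) * n + (x - 1)))
      = Tijk n ++ (Tijk n).take ((a - 1) * n ^ 2 + (b - 1) * n + (x - 1)) := by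
    rw [show n ^ 3 + ((a - 1) * n ^ 2 + (b - 1) * n + (x - 1))
        = (Tijk n).length + ((a - 1) * n ^ 2 + (b - 1) * n + (x - 1)) by rw [Tijk_length],
      List.take_append, List.take_of_length_le (Nat.le_add_right _ _), Nat.add_sub_cancel_left,
      List.take_take, Nat.min_eq_left (le_of_lt hdB)]
  refine Realized.step _ _ (n ^ 3 + ((a - 1) * n ^ 2 + (b - 1) * n + (x - 1))) s ?_ hs.1 hs.2
    ?_ ?_ ?_
  · rw [List.length_append, Tijk_length, List.length_take, Tijk_length,
      Nat.min_eq_left hB3]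
    omega
  · rw [List.getD_append_right _ _ _ _ (by rw [Tijk_length]; omega), Tijk_length,
      Nat.add_sub_cancel_left, getD_take_of_lt _ hdB,
      Tijk_getD n a b x ha.1 ha.2 hb.1 hb.2 hx.1 hx.2, ha_def, hb_def, hx_def]
  · -- left half: ends at its max x
    rw [htake]
    have hlen1 : (P.take (s + 1)).length = s + 1 := by rw [List.length_take]; omega
    have hg0 : (P.take (s + 1)).getD 0 0 = a := by
      rw [getD_take_of_lt _ (by omega : (0:ℕ) < s + 1)]
    have hgl : (P.take (s + 1)).getD ((P.take (s + 1)).length - 1) 0 = x := by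
      rw [hlen1, Nat.add_sub_cancel, getD_take_of_lt _ (by omega : s < s + 1)]
    have hmax1 : ∀ t, t < (P.take (s + 1)).length →
        (P.take (s + 1)).getD t 0 ≤ (P.take (s + 1)).getD ((P.take (s + 1)).length - 1) 0 := by
      intro t ht
      rw [hlen1] at ht
      rw [hgl, getD_take_of_lt _ (by omega : t < s + 1)]
      rcases Nat.eq_zero_or_pos t with rfl | ht1
      · exact le_of_lt hax
      · exact hsmax t (Finset.mem_Icc.mpr ⟨ht1, by omega⟩)
    have IH := ih (s + 1) (by omega) (P.take (s + 1)) hlen1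
      (fun v hv' => hv v ((List.take_sublist _ _).subset hv'))
      ((List.take_sublist _ _).nodup hnd) hmax1
    rw [hg0, hgl] at IH
    exact IH.mono (prefix_append_left _ (take_prefix_take _ (arith_left hx.1 hxb hb.2)))
  · -- right half: valley
    rw [htake]
    have hlen2 : (P.drop s).length = P.length - s := List.length_drop
    have hg0 : (P.drop s).getD 0 0 = x := by rw [getD_drop', Nat.add_zero]
    have hgl : (P.drop s).getD ((P.drop s).length - 1) 0 = b := by
      rw [getD_drop', hlen2, show s + (P.length - s - 1) = P.length - 1 by omega]
    have hval2 : ∀ t, 1 ≤ t → t ≤ (P.drop s).length - 2 →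
        (P.drop s).getD t 0 ≤
          min ((P.drop s).getD 0 0) ((P.drop s).getD ((P.drop s).length - 1) 0) := by
      intro t ht1 ht2
      rw [hlen2] at ht2
      rw [hg0, hgl, getD_drop']
      exact le_min (hsmax (s + t) (Finset.mem_Icc.mpr ⟨by omega, by omega⟩))
        (hmax (s + t) (by omega))
    have V := valley_realized n (P.drop s).length (P.drop s) rfl
      (fun v hv' => hv v ((List.drop_sublist _ _).subset hv'))
      ((List.drop_sublist _ _).nodup hnd) hval2
    rw [hg0, hgl] at V
    exact V.mono (((take_prefix_take _ (by
        calc (x - 1) * n ^ 2 + (b - 1) * n + n ≤ n ^ 3 := arith_B hx.1 hx.2 hb.2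
        _ = n ^ 3 := rfl)).trans (List.take_prefix _ _)).trans (List.prefix_append _ _))

lemma maxfirst_realized (n : ℕ) (k : ℕ) : ∀ P : List ℕ, P.length = k →
    (∀ v ∈ P, 1 ≤ v ∧ v ≤ n) → P.Nodup →
    (∀ t, t < P.length → P.getD t 0 ≤ P.getD 0 0) →
    Realized (Tijk n ++ (Tijk n).take
      ((P.getD 0 0 - 1) * n ^ 2 + (P.getD (P.length - 1) 0 - 1) * n + n)) P := by
  induction k using Nat.strong_induction_on with
  | _ k ih =>
  intro P hk hv hnd hmax
  by_cases hlen : P.length ≤ 2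
  · exact .base _ _ hlen
  push_neg at hlen
  have h0lt : 0 < P.length := by omega
  have hllt : P.length - 1 < P.length := by omega
  set a := P.getD 0 0 with ha_def
  set b := P.getD (P.length - 1) 0 with hb_def
  have ha := hv a (by rw [ha_def, List.getD_eq_getElem _ _ h0lt]; exact List.getElem_mem _)
  have hb := hv b (by rw [hb_def, List.getD_eq_getElem _ _ hllt]; exact List.getElem_mem _)
  have hne : ∀ i j, i < P.length → j < P.length → i ≠ j → P.getD i 0 ≠ P.getD j 0 := by
    intro i j hi hj hij
    rw [List.getD_eq_getElem _ _ hi, List.getD_eq_getElem _ _ hj]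
    exact fun h => hij ((List.Nodup.getElem_inj_iff hnd).mp h)
  by_cases hc : ∀ t, 1 ≤ t → t ≤ P.length - 2 → P.getD t 0 ≤ b
  · have hval : ∀ t, 1 ≤ t → t ≤ P.length - 2 →
        P.getD t 0 ≤ min (P.getD 0 0) (P.getD (P.length - 1) 0) :=
      fun t ht1 ht2 => le_min (hmax t (by omega)) (hc t ht1 ht2)
    exact (valley_realized n P.length P rfl hv hnd hval).mono
      ((List.take_prefix _ _).trans (List.prefix_append _ _))
  push_neg at hc
  obtain ⟨t₀, ht₀1, ht₀2, ht₀3⟩ := hc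
  obtain ⟨s, hs, hsmax⟩ := Finset.exists_max_image (Finset.Icc 1 (P.length - 2))
    (fun t => P.getD t 0) ⟨1, by rw [Finset.mem_Icc]; omega⟩
  rw [Finset.mem_Icc] at hs
  have hslt : s < P.length := by omega
  set x := P.getD s 0 with hx_def
  have hx := hv x (by rw [hx_def, List.getD_eq_getElem _ _ hslt]; exact List.getElem_mem _)
  have hbx : b < x := lt_of_lt_of_le ht₀3 (hsmax t₀ (Finset.mem_Icc.mpr ⟨ht₀1, ht₀2⟩))
  have hxa : x < a := lt_of_le_of_ne (hmax s (by omega)) (hne s 0 hslt h0lt (by omega))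
  have hn1 : 1 ≤ n := le_trans ha.1 ha.2
  have hdB : (a - 1) * n ^ 2 + (b - 1) * n + (x - 1) < (a - 1) * n ^ 2 + (b - 1) * n + n := by
    have := hx.2; omega
  have hB3 := arith_B (n := n) ha.1 ha.2 hb.2
  have htake : (Tijk n ++ (Tijk n).take ((a - 1) * n ^ 2 + (b - 1) * n + n)).take
        (n ^ 3 + ((a - 1) * n ^ 2 + (b - 1) * n + (x - 1)))
      = Tijk n ++ (Tijk n).take ((a - 1) * n ^ 2 + (b - 1) * n + (x - 1)) := by
    rw [show n ^ 3 + ((a - 1) * n ^ 2 + (b - 1) * n + (x - 1))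
        = (Tijk n).length + ((a - 1) * n ^ 2 + (b - 1) * n + (x - 1)) by rw [Tijk_length],
      List.take_append, List.take_of_length_le (Nat.le_add_right _ _), Nat.add_sub_cancel_left,
      List.take_take, Nat.min_eq_left (le_of_lt hdB)]
  refine Realized.step _ _ (n ^ 3 + ((a - 1) * n ^ 2 + (b - 1) * n + (x - 1))) s ?_ hs.1 hs.2
    ?_ ?_ ?_
  · rw [List.length_append, Tijk_length, List.length_take, Tijk_length,
      Nat.min_eq_left hB3]
    omega
  · rw [List.getD_append_right _ _ _ _ (by rw [Tijk_length]; omega), Tijk_length,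
      Nat.add_sub_cancel_left, getD_take_of_lt _ hdB,
      Tijk_getD n a b x ha.1 ha.2 hb.1 hb.2 hx.1 hx.2, ha_def, hb_def, hx_def]
  · -- left half: valley with endpoints a, x
    rw [htake]
    have hlen1 : (P.take (s + 1)).length = s + 1 := by rw [List.length_take]; omega
    have hg0 : (P.take (s + 1)).getD 0 0 = a := by
      rw [getD_take_of_lt _ (by omega : (0:ℕ) < s + 1)]
    have hgl : (P.take (s + 1)).getD ((P.take (s + 1)).length - 1) 0 = x := by
      rw [hlen1, Nat.add_sub_cancel, getD_take_of_lt _ (by omega : s < s + 1)]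
    have hval1 : ∀ t, 1 ≤ t → t ≤ (P.take (s + 1)).length - 2 →
        (P.take (s + 1)).getD t 0 ≤
          min ((P.take (s + 1)).getD 0 0) ((P.take (s + 1)).getD ((P.take (s + 1)).length - 1) 0) := by
      intro t ht1 ht2
      rw [hlen1] at ht2
      rw [hg0, hgl, getD_take_of_lt _ (by omega : t < s + 1)]
      exact le_min (hmax t (by omega)) (hsmax t (Finset.mem_Icc.mpr ⟨ht1, by omega⟩))
    have V := valley_realized n (P.take (s + 1)).length (P.take (s + 1)) rfl
      (fun v hv' => hv v ((List.take_sublist _ _).subset hv'))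
      ((List.take_sublist _ _).nodup hnd) hval1
    rw [hg0, hgl] at V
    exact V.mono (((take_prefix_take _ (arith_B ha.1 ha.2 hx.2)).trans
      (List.take_prefix _ _)).trans (List.prefix_append _ _))
  · -- right half: max at first
    rw [htake]
    have hlen2 : (P.drop s).length = P.length - s := List.length_drop
    have hg0 : (P.drop s).getD 0 0 = x := by rw [getD_drop', Nat.add_zero]
    have hgl : (P.drop s).getD ((P.drop s).length - 1) 0 = b := by
      rw [getD_drop', hlen2, show s + (P.length - s - 1) = P.length - 1 by omega]
    have hmax2 : ∀ t, t < (P.drop s).length → (P.drop s).getD t 0 ≤ (P.drop s).getD 0 0 := by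
      intro t ht
      rw [hlen2] at ht
      rw [hg0, getD_drop']
      rcases Nat.eq_zero_or_pos t with rfl | ht1
      · rw [Nat.add_zero]
      · rcases Nat.lt_or_ge (s + t) (P.length - 1) with h' | h'
        · exact hsmax (s + t) (Finset.mem_Icc.mpr ⟨by omega, by omega⟩)
        · rw [show s + t = P.length - 1 by omega]
          exact le_of_lt hbx
    have IH := ih (P.length - s) (by omega) (P.drop s) hlen2
      (fun v hv' => hv v ((List.drop_sublist _ _).subset hv'))
      ((List.drop_sublist _ _).nodup hnd) hmax2
    rw [hg0, hgl] at IH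
    exact IH.mono (prefix_append_left _ (take_prefix_take _ (arith_right hx.1 hxa ha.2)))

/-- Both the prefix up to and the suffix from the maximum vertex of a simple path are
realized by `(T_ijk(n))²`. -/
theorem stmt8 (n : ℕ) (P : List ℕ) (hP : ValidPath n P) (hnd : P.Nodup)
    (m : ℕ) (hm : m < P.length) (hmax : ∀ t < P.length, P.getD t 0 ≤ P.getD m 0) :
    Realized (Tijk n ++ Tijk n) (P.take (m + 1)) ∧
    Realized (Tijk n ++ Tijk n) (P.drop m) := by
  obtain ⟨hP2, hv⟩ := hP
  constructor
  · have hlen1 : (P.take (m + 1)).length = m + 1 := by rw [List.length_take]; omega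
    have hgl : (P.take (m + 1)).getD ((P.take (m + 1)).length - 1) 0 = P.getD m 0 := by
      rw [hlen1, Nat.add_sub_cancel, getD_take_of_lt _ (by omega : m < m + 1)]
    have hmax1 : ∀ t, t < (P.take (m + 1)).length →
        (P.take (m + 1)).getD t 0 ≤ (P.take (m + 1)).getD ((P.take (m + 1)).length - 1) 0 := by
      intro t ht
      rw [hlen1] at ht
      rw [hgl, getD_take_of_lt _ (by omega : t < m + 1)]
      exact hmax t (by omega)
    have IH := maxlast_realized n (m + 1) (P.take (m + 1)) hlen1
      (fun v hv' => hv v ((List.take_sublist _ _).subset hv'))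
      ((List.take_sublist _ _).nodup hnd) hmax1
    exact IH.mono (prefix_append_left _ (List.take_prefix _ _))
  · have hlen2 : (P.drop m).length = P.length - m := List.length_drop
    have hg0 : (P.drop m).getD 0 0 = P.getD m 0 := by rw [getD_drop', Nat.add_zero]
    have hmax2 : ∀ t, t < (P.drop m).length → (P.drop m).getD t 0 ≤ (P.drop m).getD 0 0 := by
      intro t ht
      rw [hlen2] at ht
      rw [hg0, getD_drop']
      exact hmax (m + t) (by omega)
    have IH := maxfirst_realized n (P.drop m).length (P.drop m) rfl
      (fun v hv' => hv v ((List.drop_sublist _ _).subset hv'))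
      ((List.drop_sublist _ _).nodup hnd) hmax2
    exact IH.mono (prefix_append_left _ (List.take_prefix _ _))
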